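/- arXiv:math/0404370 — 3 statements merged into one kernel-verified Lean document; each statement's English description precedes it below -/
import Mathlib

section
/- Let M be a loopless matroid on a finite ground set E and let ω ∈ ℝ^E. Define ω' ∈ ℝ^E by ω'_e = max over all cocircuits C* of M containing e of (min_{f ∈ C*} ω_f). Then ω'_e ≤ ω_e for all e ∈ E, and ω' is an M-ultrametric, i.e., ω' ∈ B̃(M). -/
open scoped Classical

variable {α : Type*}

/-- The ω-weight of a set of elements: the sum of ω over the set. -/
noncomputable def wSum (ω : α → ℝ) (B : Set α) : ℝ := ∑ᶠ e ∈ B, ω e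

/-- `B` is an ω-minimum basis of `M`: a basis whose ω-weight is minimum among all bases. -/
def IsMinBase [Fintype α] (M : Matroid α) (ω : α → ℝ) (B : Set α) : Prop :=
  M.IsBase B ∧ ∀ B' : Set α, M.IsBase B' → wSum ω B ≤ wSum ω B'

/-- `ω` lies in the Bergman fan of `M`: every element lies in some ω-minimum basis. -/
def InBergmanFan [Fintype α] (M : Matroid α) (ω : α → ℝ) : Prop :=
  ∀ e : α, ∃ B : Set α, IsMinBase M ω B ∧ e ∈ B

/-- `C` is a circuit of `M`: a minimal dependent set. -/
def IsCircuit (M : Matroid α) (C : Set α) : Prop := Minimal M.Dep C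

/-- A cocircuit of `M` is a circuit of the dual matroid `M✶`. -/
def IsCocircuit (M : Matroid α) (C : Set α) : Prop := IsCircuit M✶ C

open Set

lemma wSum_eq_sum [Fintype α] (ω : α → ℝ) (B : Set α) :
    wSum ω B = ∑ e ∈ B.toFinset, ω e := by
  rw [wSum, ← finsum_mem_coe_finset]
  simp

lemma wSum_exchange [Fintype α] (ω : α → ℝ) {B : Set α} {e f : α}
    (he : e ∉ B) (hf : f ∈ B) :
    wSum ω (insert e (B \ {f})) = wSum ω B - ω f + ω e := by
  rw [wSum_eq_sum, wSum_eq_sum]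
  simp only [Set.toFinset_insert, Set.toFinset_diff, Set.toFinset_singleton]
  rw [Finset.sum_insert (by simp [he]), Finset.sdiff_singleton_eq_erase]
  have := Finset.sum_erase_add B.toFinset ω (show f ∈ B.toFinset by simpa using hf)
  linarith

lemma exists_minBase [Fintype α] (M : Matroid α) (w : α → ℝ) :
    ∃ B, IsMinBase M w B := by
  obtain ⟨B, hB, hmin⟩ :=
    Set.exists_min_image {B : Set α | M.IsBase B} (wSum w) (Set.toFinite _) M.exists_isBase
  exact ⟨B, hB, fun B' hB' => hmin B' hB'⟩

lemma cocircuit_compl_not_spanning [Fintype α] {M : Matroid α} (hE : M.E = Set.univ)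
    {C : Set α} (hC : IsCocircuit M C) : ¬ M.Spanning (Set.univ \ C) := by
  intro hsp
  have hco : M.Coindep C := by
    rw [Matroid.coindep_iff_compl_spanning, hE]; exact hsp
  exact hC.prop.not_indep hco

lemma cocircuit_diff_coindep [Fintype α] {M : Matroid α} (hE : M.E = Set.univ)
    {C : Set α} (hC : IsCocircuit M C) {e : α} (heC : e ∈ C) :
    M.Coindep (C \ {e}) := by
  by_contra hni
  have hdep : M✶.Dep (C \ {e}) := by
    rw [Matroid.dep_iff]
    exact ⟨hni, by rw [Matroid.dual_ground, hE]; exact subset_univ _⟩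
  have := hC.2 hdep (diff_subset)
  exact (this heC).2 rfl

lemma not_mem_closure_compl [Fintype α] {M : Matroid α} (hE : M.E = Set.univ)
    {C : Set α} (hC : IsCocircuit M C) {e : α} (heC : e ∈ C) :
    e ∉ M.closure (Set.univ \ C) := by
  intro he
  have hsp : M.Spanning (Set.univ \ (C \ {e})) := by
    have := (cocircuit_diff_coindep hE hC heC).compl_spanning
    rwa [hE] at this
  have hset : Set.univ \ (C \ {e}) = insert e (Set.univ \ C) := by
    ext x
    by_cases hx : x = e <;> simp [hx, heC]
  rw [hset] at hsp
  apply cocircuit_compl_not_spanning hE hC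
  rw [Matroid.spanning_iff_closure_eq, hE] at hsp ⊢
  have h1 : insert e (Set.univ \ C) ⊆ M.closure (Set.univ \ C) :=
    insert_subset he (M.subset_closure _ (by rw [hE]; exact subset_univ _))
  have h2 := (M.closure_subset_closure h1).trans (M.closure_closure _).subset
  rw [hsp] at h2
  exact subset_antisymm (by rw [← hE]; exact M.closure_subset_ground _) h2

lemma mem_minBase_of_cocircuit [Fintype α] (M : Matroid α) (hE : M.E = Set.univ)
    (w : α → ℝ) {e : α} {C : Set α} (hC : IsCocircuit M C) (heC : e ∈ C)
    (hmin : ∀ f ∈ C, w e ≤ w f) : ∃ B, IsMinBase M w B ∧ e ∈ B := by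
  obtain ⟨B, hB, hBmin⟩ := exists_minBase M w
  by_cases heB : e ∈ B
  · exact ⟨B, ⟨hB, hBmin⟩, heB⟩
  -- build an exchanged base
  have heE : e ∈ M.E := by rw [hE]; exact mem_univ e
  have hIindep : M.Indep (B \ C) := hB.indep.subset diff_subset
  have hecl : e ∉ M.closure (B \ C) := fun h =>
    not_mem_closure_compl hE hC heC
      (M.closure_subset_closure (diff_subset_diff_left (by rw [← hE]; exact hB.subset_ground)) h)
  have hIe : M.Indep (insert e (B \ C)) := by
    rw [hIindep.insert_indep_iff_of_notMem (fun h => heB h.1)]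
    exact ⟨heE, hecl⟩
  obtain ⟨B', hB'basis, hsubB'⟩ :=
    hIe.subset_isBasis_of_subset
      (insert_subset_insert diff_subset) (by rw [hE]; exact subset_univ _)
  have heB' : e ∈ B' := hsubB' (mem_insert _ _)
  have hB'sub : B' ⊆ insert e B := hB'basis.subset
  have hB'base : M.IsBase B' := by
    apply hB'basis.indep.isBase_of_spanning
    rw [Matroid.spanning_iff_closure_eq, hB'basis.closure_eq_closure]
    have : M.Spanning (insert e B) :=
      hB.spanning.superset (subset_insert _ _) (by rw [hE]; exact subset_univ _)
    rwa [Matroid.spanning_iff_closure_eq] at this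
  -- the removed element
  have hdep : M.Dep (insert e B) := hB.insert_dep ⟨heE, heB⟩
  have hne : B' ≠ insert e B := fun h => hdep.not_indep (h ▸ hB'basis.indep)
  have hcard : B'.ncard = B.ncard := hB'base.ncard_eq_ncard_of_isBase hB
  have hD : ((insert e B) \ B').ncard = 1 := by
    rw [Set.ncard_diff hB'sub, Set.ncard_insert_of_notMem heB, hcard]
    omega
  obtain ⟨f, hf⟩ := Set.ncard_eq_one.mp hD
  have hfmem : f ∈ insert e B ∧ f ∉ B' := by
    have : f ∈ (insert e B) \ B' := hf ▸ mem_singleton f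
    exact ⟨this.1, this.2⟩
  have hfe : f ≠ e := fun h => hfmem.2 (h ▸ heB')
  have hfB : f ∈ B := hfmem.1.resolve_left hfe
  have hfC : f ∈ C := by
    by_contra hfC
    exact hfmem.2 (hsubB' (mem_insert_of_mem _ ⟨hfB, hfC⟩))
  have hB'eq : B' = insert e (B \ {f}) := by
    have h1 : B' ⊆ insert e B \ {f} := fun x hx =>
      ⟨hB'sub hx, fun hxf => hfmem.2 ((mem_singleton_iff.mp hxf) ▸ hx)⟩
    have h2 : insert e B \ {f} ⊆ B' := by
      intro x hx
      by_contra hxB'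
      have : x ∈ (insert e B) \ B' := ⟨hx.1, hxB'⟩
      rw [hf] at this
      exact hx.2 this
    have : B' = insert e B \ {f} := subset_antisymm h1 h2
    rw [this]
    ext x
    by_cases hx : x = e <;> simp [hx, hfe.symm, fun h : x = f => h]
  have hwB' : wSum w B' = wSum w B - w f + w e := by
    rw [hB'eq]; exact wSum_exchange w heB hfB
  refine ⟨B', ⟨hB'base, fun B'' hB'' => ?_⟩, heB'⟩
  have := hBmin B'' hB''
  have hwe := hmin f hfC
  rw [hwB']
  linarith

lemma exists_cocircuit_mem [Fintype α] (M : Matroid α) (hE : M.E = Set.univ)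
    (hloopless : ∀ e : α, M.Indep {e}) (e : α) :
    ∃ C, IsCocircuit M C ∧ e ∈ C := by
  obtain ⟨B, hB, heB'⟩ := (hloopless e).exists_isBase_superset
  have heB : e ∈ B := heB' rfl
  set H := M.closure (B \ {e}) with hH
  have heH : e ∉ H := hB.indep.notMem_closure_diff_of_mem heB
  have hHground : H ⊆ Set.univ := subset_univ _
  -- univ \ H is dependent in the dual
  have hdep : M✶.Dep (Set.univ \ H) := by
    rw [Matroid.dep_iff]
    refine ⟨fun hind => ?_, by rw [Matroid.dual_ground, hE]; exact subset_univ _⟩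
    have hsp : M.Spanning H := by
      have := (Matroid.coindep_iff_compl_spanning (M := M)
        (I := Set.univ \ H) (by rw [hE]; exact subset_univ _)).mp hind
      rwa [hE, diff_diff_cancel_left (by rw [← hE]; exact M.closure_subset_ground _)] at this
    rw [Matroid.spanning_iff_closure_eq, hE, hH, M.closure_closure] at hsp
    exact heH (by rw [hH, hsp]; exact mem_univ e)
  -- any element can be removed to get a coindependent set
  have hkey : ∀ x ∈ Set.univ \ H, M.Coindep ((Set.univ \ H) \ {x}) := by
    intro x hx
    rw [Matroid.coindep_iff_compl_spanning (by rw [hE]; exact subset_univ _), hE]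
    have hset : Set.univ \ ((Set.univ \ H) \ {x}) = insert x H := by
      ext y
      by_cases hy : y = x
      · simp [hy, hx.2]
      · simp [hy]
    rw [hset]
    -- insert x (B \ {e}) is a base
    have hxBe : x ∉ B \ {e} := fun h => hx.2 (M.subset_closure _ (by rw [hE]; exact subset_univ _) h)
    have hxind : M.Indep (insert x (B \ {e})) := by
      rw [(hB.indep.subset diff_subset).insert_indep_iff_of_notMem hxBe]
      exact ⟨by rw [hE]; exact mem_univ x, hx.2⟩
    obtain ⟨B₂, hB₂, hsub₂⟩ := hxind.exists_isBase_superset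
    have hBfin : B.Finite := Set.toFinite _
    have hcard : B₂.ncard ≤ (insert x (B \ {e})).ncard := by
      rw [Set.ncard_insert_of_notMem hxBe, Set.ncard_diff_singleton_of_mem heB,
        hB₂.ncard_eq_ncard_of_isBase hB]
      have : 1 ≤ B.ncard := (Set.ncard_pos (Set.toFinite _)).mpr ⟨e, heB⟩
      omega
    have : insert x (B \ {e}) = B₂ := Set.eq_of_subset_of_ncard_le hsub₂ hcard
    have hbase : M.IsBase (insert x (B \ {e})) := this ▸ hB₂
    exact hbase.spanning.superset
      (insert_subset_insert (M.subset_closure _ (by rw [hE]; exact subset_univ _)))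
      (by rw [hE]; exact subset_univ _)
  refine ⟨Set.univ \ H, ⟨hdep, fun D hD hDsub => ?_⟩, ⟨mem_univ e, heH⟩⟩
  by_contra hnot
  obtain ⟨x, hxC, hxD⟩ := not_subset.mp hnot
  exact hD.not_indep ((hkey x hxC).subset (subset_diff_singleton hDsub hxD))

/-- For a loopless matroid M and ω ∈ ℝ^E, the vector ω' given by
ω'_e = max over cocircuits C* containing e of (min_{f ∈ C*} ω_f) satisfies ω' ≤ ω
componentwise and is an M-ultrametric. -/
theorem stmt3 [Fintype α] (M : Matroid α) (hE : M.E = Set.univ)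
    (hloopless : ∀ e : α, M.Indep {e}) (ω ω' : α → ℝ)
    (hω' : ∀ e : α, ω' e =
      sSup {r : ℝ | ∃ C : Set α, IsCocircuit M C ∧ e ∈ C ∧ r = sInf (ω '' C)}) :
    (∀ e, ω' e ≤ ω e) ∧ InBergmanFan M ω' := by
  set S : α → Set ℝ := fun e => {r : ℝ | ∃ C : Set α, IsCocircuit M C ∧ e ∈ C ∧ r = sInf (ω '' C)}
    with hS
  have hfin : ∀ e, (S e).Finite := by
    intro e
    apply Set.Finite.subset (Set.finite_range (fun C : Set α => sInf (ω '' C)))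
    rintro r ⟨C, -, -, rfl⟩
    exact ⟨C, rfl⟩
  have hne : ∀ e, (S e).Nonempty := by
    intro e
    obtain ⟨C, hC, heC⟩ := exists_cocircuit_mem M hE hloopless e
    exact ⟨sInf (ω '' C), C, hC, heC, rfl⟩
  constructor
  · intro e
    rw [hω' e]
    apply csSup_le (hne e)
    rintro r ⟨C, hC, heC, rfl⟩
    exact csInf_le (Set.Finite.bddBelow (Set.toFinite _)) ⟨e, heC, rfl⟩
  · intro e
    have hmem : ω' e ∈ S e := by
      rw [hω' e]
      exact (hne e).csSup_mem (hfin e)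
    obtain ⟨C, hC, heC, hval⟩ := hmem
    apply mem_minBase_of_cocircuit M hE ω' hC heC
    intro f hfC
    rw [hω' f]
    apply le_csSup ((hfin f).bddAbove)
    exact ⟨C, hC, hfC, hval⟩
end

section
/- Let M be a matroid on a finite ground set E, let ω ∈ ℝ^E, and let e ∈ E. Then e is ω-minimum in some cocircuit of M if and only if e is not the unique ω-maximum element of any circuit of M. (Equivalently: the blue rule applies to e if and only if the red rule applies to e.) -/
open scoped Classical

variable {α : Type*}

/-- If `g` lies in a cocircuit `K`, then `g` is not in the closure of the complement of `K`. -/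
lemma cocircuit_not_mem_closure_compl [Fintype α] {M : Matroid α} (hE : M.E = Set.univ)
    {K : Set α} (hK : IsCocircuit M K) {g : α} (hg : g ∈ K) :
    g ∉ M.closure (Set.univ \ K) := by
  intro hgcl
  -- K \ {g} is coindependent
  have hKg : M✶.Indep (K \ {g}) := by
    rw [← Matroid.not_dep_iff (by simp [hE])]
    intro hdep
    exact (Set.notMem_diff_of_mem rfl) (hK.2 hdep Set.diff_subset hg)
  obtain ⟨B, hB, hdisj⟩ := (Matroid.dual_indep_iff_exists (by simp [hE])).1 hKg
  -- every base meets K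
  have hmeet : ∀ B', M.IsBase B' → (K ∩ B').Nonempty := fun B' hB' =>
    ((Matroid.dual_dep_iff_forall).1 hK.1).1 B' hB'
  have hgB : g ∈ B := by
    obtain ⟨x, hxK, hxB⟩ := hmeet B hB
    by_contra hne
    exact hdisj.ne_of_mem ⟨hxK, fun h : x = g => hne (h ▸ hxB)⟩ hxB rfl
  -- univ \ K ⊆ closure (B \ {g})
  have hsub : Set.univ \ K ⊆ M.closure (B \ {g}) := by
    intro x hx
    by_contra hxcl
    have hxB : x ∉ B := by
      intro hxB
      exact hxcl (M.subset_closure (B \ {g}) (by simp [hE]) ⟨hxB, fun h : x = g => hx.2 (h ▸ hg)⟩)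
    have hind : M.Indep (insert x (B \ {g})) :=
      (((hB.indep.subset Set.diff_subset).notMem_closure_iff (by simp [hE])).1 hxcl).1
    have hxg : x ≠ g := fun h => hx.2 (h ▸ hg)
    rw [Set.insert_diff_singleton_comm hxg] at hind
    have hB' : M.IsBase (insert x B \ {g}) := hB.exchange_isBase_of_indep' hgB hxB hind
    obtain ⟨y, hyK, hyB'⟩ := hmeet _ hB'
    obtain ⟨hyB'', hyg⟩ := hyB'
    rcases hyB'' with rfl | hyB3
    · exact hx.2 hyK
    · exact hdisj.ne_of_mem ⟨hyK, hyg⟩ hyB3 rfl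
  have : g ∈ M.closure (B \ {g}) :=
    M.closure_subset_closure_of_subset_closure hsub hgcl
  exact hB.indep.notMem_closure_sdiff_of_mem hgB this

lemma circuit_mem_closure_diff {M : Matroid α} {C : Set α} (hC : IsCircuit M C) {e : α}
    (he : e ∈ C) : e ∈ M.closure (C \ {e}) := by
  have hind : M.Indep (C \ {e}) := by
    rw [← Matroid.not_dep_iff (Set.diff_subset.trans hC.1.subset_ground)]
    intro hdep
    exact (Set.notMem_diff_of_mem rfl) (hC.2 hdep Set.diff_subset he)
  rw [hind.mem_closure_iff]
  left
  rw [Set.insert_diff_singleton, Set.insert_eq_of_mem he]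
  exact hC.1

/-- For any matroid M, ω ∈ ℝ^E and e ∈ E: e is ω-minimum in some
cocircuit of M iff e is not the unique ω-maximum element of any circuit of M. -/
theorem stmt6 [Fintype α] (M : Matroid α) (hE : M.E = Set.univ) (ω : α → ℝ) (e : α) :
    (∃ C : Set α, IsCocircuit M C ∧ e ∈ C ∧ ∀ f ∈ C, ω e ≤ ω f) ↔
      ¬ ∃ C : Set α, IsCircuit M C ∧ e ∈ C ∧ ∀ f ∈ C \ {e}, ω f < ω e := by
  constructor
  · rintro ⟨K, hK, heK, hmin⟩ ⟨C, hC, heC, hmax⟩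
    have hsub : C \ {e} ⊆ Set.univ \ K := by
      rintro f ⟨hfC, hfe⟩
      refine ⟨Set.mem_univ f, fun hfK => ?_⟩
      exact absurd (hmin f hfK) (not_le.2 (hmax f ⟨hfC, hfe⟩))
    have h1 : e ∈ M.closure (Set.univ \ K) :=
      M.closure_subset_closure hsub (circuit_mem_closure_diff hC heC)
    exact cocircuit_not_mem_closure_compl hE hK heK h1
  · intro hno
    set S : Set α := {f | ω f < ω e} with hS
    have heS : e ∉ S := by simp [hS]
    obtain ⟨I, hI⟩ := M.exists_isBasis S (by simp [hE])
    have heI : e ∉ I := fun h => heS (hI.subset h)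
    -- e is not in the closure of S
    have hecl : e ∉ M.closure S := by
      intro hecl
      rw [← hI.closure_eq_closure] at hecl
      have hdep : M.Dep (insert e I) := (hI.indep.mem_closure_iff_of_notMem heI).1 hecl
      obtain ⟨C, hCle, hCmin⟩ := exists_minimal_le_of_wellFoundedLT _ _ hdep
      have heC : e ∈ C := by
        by_contra heC
        have : C ⊆ I := fun x hx => ((hCle : C ⊆ insert e I) hx).resolve_left
          (fun h => heC (h ▸ hx))
        exact hCmin.1.not_indep (hI.indep.subset this)
      refine hno ⟨C, hCmin, heC, fun f hf => ?_⟩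
      have : f ∈ I := ((hCle : C ⊆ insert e I) hf.1).resolve_left hf.2
      exact hI.subset this
    -- extend insert e I to a base
    have hins : M.Indep (insert e I) := by
      rw [← hI.closure_eq_closure] at hecl
      exact ((hI.indep.notMem_closure_iff (by simp [hE])).1 hecl).1
    obtain ⟨B, hB, hinsB⟩ := hins.exists_isBase_superset
    have heB : e ∈ B := hinsB (Set.mem_insert e I)
    have hIB : I ⊆ B \ {e} := fun x hx =>
      ⟨hinsB (Set.mem_insert_of_mem e hx), fun h : x = e => heI (h ▸ hx)⟩
    have hnecl : e ∉ M.closure (B \ {e}) := hB.indep.notMem_closure_sdiff_of_mem heB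
    refine ⟨Set.univ \ M.closure (B \ {e}), ?_, ⟨Set.mem_univ e, hnecl⟩, ?_⟩
    · -- it is a cocircuit
      constructor
      · -- dependent in the dual
        rw [Matroid.dual_dep_iff_forall]
        refine ⟨fun B' hB' => ?_, by simp [hE]⟩
        rw [Set.inter_comm]
        by_contra hempty
        rw [Set.not_nonempty_iff_eq_empty, ← Set.disjoint_iff_inter_eq_empty] at hempty
        have hsub : B' ⊆ M.closure (B \ {e}) := by
          intro x hxB'
          by_contra hxcl
          exact (Set.disjoint_left.1 hempty hxB') ⟨Set.mem_univ x, hxcl⟩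
        have : e ∈ M.closure (B \ {e}) := by
          refine M.closure_subset_closure_of_subset_closure hsub ?_
          rw [hB'.closure_eq, hE]
          exact Set.mem_univ e
        exact hnecl this
      · -- minimality
        intro D hD hDle
        by_contra hKD
        obtain ⟨f, hfK, hfD⟩ := Set.not_subset.1 hKD
        have hindf : M✶.Indep ((Set.univ \ M.closure (B \ {e})) \ {f}) := by
          by_cases hfe : f = e
          · rw [hfe]
            refine (Matroid.dual_indep_iff_exists (by simp [hE])).2 ⟨B, hB, ?_⟩
            rw [Set.disjoint_left]
            rintro x ⟨⟨_, hxcl⟩, hxf⟩ hxB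
            exact hxcl (M.subset_closure (B \ {e}) (by simp [hE]) ⟨hxB, hxf⟩)
          · have hfcl : f ∉ M.closure (B \ {e}) := hfK.2
            have hfB : f ∉ B := fun h =>
              hfcl (M.subset_closure (B \ {e}) (by simp [hE]) ⟨h, hfe⟩)
            have hindp : M.Indep (insert f (B \ {e})) :=
              (((hB.indep.subset Set.diff_subset).notMem_closure_iff (by simp [hE])).1 hfcl).1
            rw [Set.insert_diff_singleton_comm hfe] at hindp
            have hB' : M.IsBase (insert f B \ {e}) := hB.exchange_isBase_of_indep' heB hfB hindp
            refine (Matroid.dual_indep_iff_exists (by simp [hE])).2 ⟨_, hB', ?_⟩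
            rw [Set.disjoint_left]
            rintro x ⟨⟨_, hxcl⟩, hxf⟩ ⟨hxB', hxe⟩
            rcases hxB' with rfl | hxB
            · exact hxf rfl
            · exact hxcl (M.subset_closure (B \ {e}) (by simp [hE]) ⟨hxB, hxe⟩)
        have hDsub : D ⊆ (Set.univ \ M.closure (B \ {e})) \ {f} := fun x hx =>
          ⟨hDle hx, fun h : x = f => hfD (h ▸ hx)⟩
        exact hD.not_indep (hindf.subset hDsub)
    · -- e is ω-minimum
      intro f hf
      by_contra hlt
      have hfS : f ∈ S := not_le.1 hlt
      have : f ∈ M.closure (B \ {e}) := by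
        have h1 : S ⊆ M.closure S := M.subset_closure S (by simp [hE])
        have h2 : M.closure S = M.closure I := hI.closure_eq_closure.symm
        have h3 : M.closure I ⊆ M.closure (B \ {e}) := M.closure_subset_closure hIB
        exact h3 (h2 ▸ h1 hfS)
      exact hf.2 this
end

section
/- Let M be a loopless matroid on a finite ground set E, let ω ∈ ℝ^E, let B be an ω-minimum basis of M, and let e ∈ E \ B. Let C_0 be the fundamental circuit of B and e, i.e., the unique circuit of M contained in B ∪ {e}. Then the subdominant M-ultrametric satisfies ω^M_e = max_{f ∈ C_0 \ {e}} ω_f. -/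
open scoped Classical

variable {α : Type*}

lemma wSum_insert [Fintype α] (ω : α → ℝ) {S : Set α} {a : α} (ha : a ∉ S) :
    wSum ω (insert a S) = ω a + wSum ω S :=
  finsum_mem_insert ω ha (Set.toFinite S)

lemma wSum_remove [Fintype α] (ω : α → ℝ) {S : Set α} {a : α} (ha : a ∈ S) :
    wSum ω S = ω a + wSum ω (S \ {a}) := by
  nth_rewrite 1 [show S = insert a (S \ {a}) by simp [Set.insert_diff_singleton,
    Set.insert_eq_of_mem ha]]
  exact wSum_insert ω (by simp)

lemma IsCircuit.dep {M : Matroid α} {C : Set α} (hC : IsCircuit M C) : M.Dep C := hC.1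

lemma IsCircuit.diff_indep {M : Matroid α} {C : Set α} (hC : IsCircuit M C) {x : α}
    (hx : x ∈ C) : M.Indep (C \ {x}) := by
  by_contra h
  rw [Matroid.not_indep_iff ((Set.diff_subset).trans hC.dep.subset_ground)] at h
  exact (hC.2 h Set.diff_subset hx).2 rfl

lemma IsCircuit.mem_closure_diff {M : Matroid α} {C : Set α} (hC : IsCircuit M C) {x : α}
    (hx : x ∈ C) : x ∈ M.closure (C \ {x}) := by
  have h : M.Dep (insert x (C \ {x})) := by
    rw [Set.insert_diff_singleton, Set.insert_eq_of_mem hx]; exact hC.dep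
  exact (((hC.diff_indep hx).insert_dep_iff).1 h).1

/-- Exchange out of a basis along a circuit. -/
lemma circuit_exchange {M : Matroid α} {B' : Set α} (hB' : M.IsBase B') {x : α} (hx : x ∈ B')
    {C : Set α} (hC : IsCircuit M C) (hxC : x ∈ C) :
    ∃ f ∈ C \ {x}, f ∉ B' ∧ M.IsBase (insert f (B' \ {x})) := by
  have hI : M.Indep (B' \ {x}) := hB'.indep.subset Set.diff_subset
  have hxcl : x ∉ M.closure (B' \ {x}) := hB'.indep.notMem_closure_diff_of_mem hx
  have hex : ∃ f ∈ C \ {x}, f ∉ M.closure (B' \ {x}) := by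
    by_contra h
    push_neg at h
    exact hxcl (M.closure_subset_closure_of_subset_closure h (hC.mem_closure_diff hxC))
  obtain ⟨f, hfC, hfcl⟩ := hex
  have hfB' : f ∉ B' := by
    intro hfB'
    exact hfcl (M.subset_closure _ hI.subset_ground ⟨hfB', hfC.2⟩)
  have hfE : f ∈ M.E := hC.dep.subset_ground hfC.1
  have hind : M.Indep (insert f (B' \ {x})) := by
    rw [hI.insert_indep_iff_of_notMem (by simp [hfB'])]
    exact ⟨hfE, hfcl⟩
  exact ⟨f, hfC, hfB', hB'.exchange_isBase_of_indep hfB' hind⟩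

/-- Exchange into a basis along a fundamental circuit. -/
lemma circuit_exchange_in {M : Matroid α} {B : Set α} (hB : M.IsBase B) {x : α} (hxB : x ∉ B)
    {C : Set α} (hC : IsCircuit M C) (hxC : x ∈ C) (hCB : C ⊆ insert x B)
    {f : α} (hf : f ∈ C \ {x}) : M.IsBase (insert x (B \ {f})) := by
  have hfB : f ∈ B := by
    rcases hCB hf.1 with h | h
    · exact absurd h hf.2
    · exact h
  have hI : M.Indep (B \ {f}) := hB.indep.subset Set.diff_subset
  have hxE : x ∈ M.E := hC.dep.subset_ground hxC
  have hind : M.Indep (insert x (B \ {f})) := by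
    rw [hI.insert_indep_iff_of_notMem (by simp [hxB])]
    refine ⟨hxE, fun hxcl => ?_⟩
    have h1 : f ∈ M.closure (C \ {f}) := hC.mem_closure_diff hf.1
    have h2 : C \ {f} ⊆ insert x (B \ {f}) := by
      intro y hy
      rcases hCB hy.1 with h | h
      · exact h ▸ Set.mem_insert _ _
      · exact Set.mem_insert_of_mem _ ⟨h, hy.2⟩
    have h3 : f ∈ M.closure (insert x (B \ {f})) :=
      M.closure_subset_closure h2 h1
    rw [Matroid.closure_insert_eq_of_mem_closure hxcl] at h3
    exact hB.indep.notMem_closure_diff_of_mem hfB h3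
  exact hB.exchange_isBase_of_indep hxB hind

/-- Every dependent set contains a circuit. -/
lemma exists_circuit_subset [Fintype α] {M : Matroid α} {D : Set α} (hD : M.Dep D) :
    ∃ C ⊆ D, IsCircuit M C := by
  obtain ⟨C, hCD, hC⟩ := exists_minimal_le_of_wellFoundedLT _ _ hD
  exact ⟨C, hCD, hC⟩


/-- Local exchange optimality implies global minimality of a basis. -/
lemma min_of_local [Fintype α] {M : Matroid α} {u : α → ℝ} {B : Set α} (hB : M.IsBase B)
    (hstep : ∀ B' x, M.IsBase B' → x ∈ B' \ B →
      ∃ f ∈ B \ B', M.IsBase (insert f (B' \ {x})) ∧ u f ≤ u x) :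
    ∀ B', M.IsBase B' → wSum u B ≤ wSum u B' := by
  intro B' hB'
  obtain ⟨n, hn⟩ : ∃ n, (B' \ B).ncard = n := ⟨_, rfl⟩
  induction n using Nat.strong_induction_on generalizing B' with
  | _ n IH =>
    rcases Set.eq_empty_or_nonempty (B' \ B) with hemp | ⟨x, hx⟩
    · rw [hB'.eq_of_subset_isBase hB (Set.diff_eq_empty.1 hemp)]
    · obtain ⟨f, hf, hB'', hle⟩ := hstep B' x hB' hx
      have hfx : f ∉ B' \ {x} := fun h => hf.2 h.1
      have hsum : wSum u (insert f (B' \ {x})) = u f + (wSum u B' - u x) := by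
        rw [wSum_insert u hfx, wSum_remove u hx.1]; ring
      have hdiff : insert f (B' \ {x}) \ B = (B' \ B) \ {x} := by
        ext y
        simp only [Set.mem_diff, Set.mem_insert_iff, Set.mem_singleton_iff]
        constructor
        · rintro ⟨rfl | ⟨h1, h2⟩, h3⟩
          · exact absurd hf.1 h3
          · exact ⟨⟨h1, h3⟩, h2⟩
        · rintro ⟨⟨h1, h2⟩, h3⟩
          exact ⟨Or.inr ⟨h1, h3⟩, h2⟩
      have hcard : ((B' \ B) \ {x}).ncard < n := by
        rw [← hn]
        exact Set.ncard_lt_ncard (by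
          constructor
          · exact Set.diff_subset
          · intro hsub
            exact (hsub hx).2 rfl) (Set.toFinite _)
      have := IH _ hcard (insert f (B' \ {x})) hB'' (by rw [hdiff])
      rw [hsum] at this
      linarith

/-- For a loopless matroid M, ω ∈ ℝ^E, an ω-minimum basis B, an element
e ∉ B, and the fundamental circuit C₀ of B and e: the subdominant M-ultrametric satisfies
ω^M_e = max_{f ∈ C₀ \ {e}} ω_f. -/
theorem stmt8 [Fintype α] (M : Matroid α) (hE : M.E = Set.univ)
    (hloopless : ∀ e : α, M.Indep {e}) (ω usub : α → ℝ)
    (h1 : InBergmanFan M usub) (h2 : ∀ e, usub e ≤ ω e)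
    (h3 : ∀ u : α → ℝ, InBergmanFan M u → (∀ e, u e ≤ ω e) → ∀ e, u e ≤ usub e)
    (B : Set α) (hB : IsMinBase M ω B) (e : α) (he : e ∉ B)
    (C₀ : Set α) (hC₀ : IsCircuit M C₀) (heC₀ : e ∈ C₀) (hC₀B : C₀ ⊆ insert e B) :
    usub e = sSup (ω '' (C₀ \ {e})) := by
  classical
  have hBbase := hB.1
  -- fundamental circuits for each x ∉ B
  have hfund : ∀ x, x ∉ B → ∃ C, IsCircuit M C ∧ x ∈ C ∧ C ⊆ insert x B := by
    intro x hxB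
    have hdep : M.Dep (insert x B) := hBbase.insert_dep ⟨by rw [hE]; trivial, hxB⟩
    obtain ⟨C, hCD, hC⟩ := exists_circuit_subset hdep
    have hxC : x ∈ C := by
      by_contra hxC
      have hsub : C ⊆ B := fun y hy => (hCD hy).resolve_left (fun h => hxC (h ▸ hy))
      exact hC.dep.1 (hBbase.indep.subset hsub)
    exact ⟨C, hC, hxC, hCD⟩
  choose! Cc hCc1 hCc2 hCc3 using hfund
  set Cx : α → Set α := fun x => if x = e then C₀ else Cc x with hCxdef
  have hCx : ∀ x, x ∉ B → IsCircuit M (Cx x) ∧ x ∈ Cx x ∧ Cx x ⊆ insert x B := by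
    intro x hxB
    by_cases hxe : x = e
    · subst hxe
      simp only [hCxdef, if_pos rfl]
      exact ⟨hC₀, heC₀, hC₀B⟩
    · simp only [hCxdef, if_neg hxe]
      exact ⟨hCc1 x hxB, hCc2 x hxB, hCc3 x hxB⟩
  have hne : ∀ x, x ∉ B → (Cx x \ {x}).Nonempty := by
    intro x hxB
    obtain ⟨hc, hxc, -⟩ := hCx x hxB
    rw [Set.nonempty_iff_ne_empty]
    intro hemp
    have hsub : Cx x ⊆ {x} := by rw [← Set.diff_eq_empty] at *; exact hemp
    have : Cx x = {x} := hsub.antisymm (by simpa using hxc)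
    exact hc.dep.1 (this ▸ hloopless x)
  -- local optimality of B for ω
  have hω_le : ∀ x, x ∉ B → ∀ f ∈ Cx x \ {x}, ω f ≤ ω x := by
    intro x hxB f hf
    obtain ⟨hc, hxc, hsub⟩ := hCx x hxB
    have hfB : f ∈ B := (hsub hf.1).resolve_left hf.2
    have hBx := circuit_exchange_in hBbase hxB hc hxc hsub hf
    have hmin := hB.2 _ hBx
    rw [wSum_insert ω (fun h => hxB h.1), wSum_remove ω hfB] at hmin
    linarith
  -- the candidate ultrametric u
  set u : α → ℝ := fun x => if x ∈ B then ω x else sSup (ω '' (Cx x \ {x})) with hudef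
  have hu_B : ∀ f ∈ B, u f = ω f := fun f hf => by simp [hudef, hf]
  have hu_nB : ∀ x, x ∉ B → u x = sSup (ω '' (Cx x \ {x})) := fun x hx => by
    simp [hudef, hx]
  have hu_le : ∀ x, u x ≤ ω x := by
    intro x
    by_cases hxB : x ∈ B
    · rw [hu_B x hxB]
    · rw [hu_nB x hxB]
      refine csSup_le ((hne x hxB).image ω) ?_
      rintro y ⟨f, hf, rfl⟩
      exact hω_le x hxB f hf
  have hufx : ∀ x, x ∉ B → ∀ f ∈ Cx x \ {x}, u f ≤ u x := by
    intro x hxB f hf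
    obtain ⟨hc, hxc, hsub⟩ := hCx x hxB
    have hfB : f ∈ B := (hsub hf.1).resolve_left hf.2
    rw [hu_B f hfB, hu_nB x hxB]
    exact le_csSup (Set.Finite.bddAbove (Set.toFinite _)) (Set.mem_image_of_mem ω hf)
  -- B is u-minimum
  have hBmin_u : ∀ B', M.IsBase B' → wSum u B ≤ wSum u B' := by
    refine min_of_local hBbase ?_
    intro B' x hB' hx
    obtain ⟨hc, hxc, hsub⟩ := hCx x hx.2
    obtain ⟨f, hfC, hfB', hB''⟩ := circuit_exchange hB' hx.1 hc hxc
    have hfB : f ∈ B := (hsub hfC.1).resolve_left hfC.2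
    exact ⟨f, ⟨hfB, hfB'⟩, hB'', hufx x hx.2 f hfC⟩
  -- u is in the Bergman fan
  have hug : InBergmanFan M u := by
    intro x
    by_cases hxB : x ∈ B
    · exact ⟨B, ⟨hBbase, hBmin_u⟩, hxB⟩
    · obtain ⟨hc, hxc, hsub⟩ := hCx x hxB
      have hmem : sSup (ω '' (Cx x \ {x})) ∈ ω '' (Cx x \ {x}) :=
        ((hne x hxB).image ω).csSup_mem (Set.toFinite _)
      obtain ⟨f₀, hf₀, hf₀eq⟩ := hmem
      have hf₀B : f₀ ∈ B := (hsub hf₀.1).resolve_left hf₀.2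
      have hB'' := circuit_exchange_in hBbase hxB hc hxc hsub hf₀
      have hval : u f₀ = u x := by
        rw [hu_B f₀ hf₀B, hu_nB x hxB, hf₀eq]
      have hsum : wSum u (insert x (B \ {f₀})) = wSum u B := by
        rw [wSum_insert u (fun h => hxB h.1), ← hval, ← wSum_remove u hf₀B]
      exact ⟨insert x (B \ {f₀}), ⟨hB'', fun B''' hB''' => by
        rw [hsum]; exact hBmin_u B''' hB'''⟩, Set.mem_insert _ _⟩
  -- lower bound
  have hlow : sSup (ω '' (C₀ \ {e})) ≤ usub e := by
    have := h3 u hug hu_le e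
    rwa [hu_nB e he, show Cx e = C₀ from by simp [hCxdef]] at this
  -- upper bound
  have hupp : usub e ≤ sSup (ω '' (C₀ \ {e})) := by
    obtain ⟨B', hB'min, heB'⟩ := h1 e
    obtain ⟨f, hfC, hfB', hB''⟩ := circuit_exchange hB'min.1 heB' hC₀ heC₀
    have hmin := hB'min.2 _ hB''
    rw [wSum_insert usub (fun h => hfB' h.1)] at hmin
    rw [wSum_remove usub heB'] at hmin
    have h4 : usub e ≤ usub f := by linarith
    calc usub e ≤ usub f := h4
      _ ≤ ω f := h2 f
      _ ≤ sSup (ω '' (C₀ \ {e})) :=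
        le_csSup (Set.Finite.bddAbove (Set.toFinite _)) (Set.mem_image_of_mem ω hfC)
  exact le_antisymm hupp hlow
end
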